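/- (Bellman estimate (4.4), case α ∈ (0,1/2).) Let 0 < α < 1/2 and set B(x,y) := (xy)^α. There exists a constant c_α > 0, depending only on α, such that for all real numbers x, y > 0 and x₊, x₋, y₊, y₋ ≥ 0 with x = (x₊ + x₋)/2 and y = (y₊ + y₋)/2: B(x,y) − (B(x₊,y₊) + B(x₋,y₋))/2 ≥ c_α · (xy)^α · (|x₊ − x₋|/x) · (|y₊ − y₋|/y). Moreover B is concave on the quadrant {x ≥ 0, y ≥ 0}. -/

import Mathlib

/-!
Bellman estimate (4.4) for `B(x,y) = (xy)^α`, `0 < α < 1/2`: concavity of `B`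
on the first quadrant, together with the quantitative midpoint concavity
inequality with extra gain `c_α (xy)^α (|x₊-x₋|/x)(|y₊-y₋|/y)`.
-/

open Real

-- Bernoulli-type lower bound for negative exponent
lemma bern_inv {β u : ℝ} (hβ0 : 0 < β) (hβ1 : β < 1) (hu0 : 0 < u) (hu1 : u < 1) :
    1 + (1 - β) * u ≤ (1 - u) ^ (β - 1) := by
  have h1u : (0:ℝ) < 1 - u := by linarith
  have hber : (1 - u) ^ (1 - β) ≤ 1 - (1 - β) * u := by
    have := rpow_one_add_le_one_add_mul_self (s := -u) (by linarith) (p := 1 - β)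
      (by linarith) (by linarith)
    calc (1 - u) ^ (1-β) = (1 + -u) ^ (1-β) := by ring_nf
    _ ≤ 1 + (1-β) * (-u) := this
    _ = 1 - (1-β)*u := by ring
  have hpos : (0:ℝ) < (1 - u) ^ (1 - β) := Real.rpow_pos_of_pos h1u _
  have hkey : (1 + (1 - β) * u) * (1 - u) ^ (1 - β) ≤ 1 := by
    have hge : 0 ≤ 1 + (1-β)*u := by nlinarith
    calc (1 + (1 - β) * u) * (1 - u) ^ (1 - β) ≤ (1 + (1-β)*u) * (1 - (1-β)*u) :=
          mul_le_mul_of_nonneg_left hber hge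
    _ = 1 - ((1-β)*u)^2 := by ring
    _ ≤ 1 := by nlinarith
  have : (1 - u) ^ (β - 1) = ((1 - u) ^ (1 - β))⁻¹ := by
    rw [← Real.rpow_neg h1u.le]; ring_nf
  rw [this, ← one_div, le_div_iff₀ hpos]
  exact hkey

lemma oneD {β : ℝ} (hβ0 : 0 < β) (hβ1 : β < 1) {u : ℝ} (hu0 : 0 ≤ u) (hu1 : u ≤ 1) :
    (1 + u) ^ β + (1 - u) ^ β ≤ 2 - β * (1 - β) / 2 * u ^ 2 := by
  set F : ℝ → ℝ := fun t => 2 - β * (1 - β) / 2 * t ^ 2 - (1 + t) ^ β - (1 - t) ^ β with hF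
  have hmono : MonotoneOn F (Set.Icc 0 1) := by
    apply monotoneOn_of_hasDerivWithinAt_nonneg (f' := fun t =>
      β * (1 - t) ^ (β - 1) - β * (1 + t) ^ (β - 1) - β * (1 - β) * t) (convex_Icc 0 1)
    · apply ContinuousOn.sub
      apply ContinuousOn.sub
      · exact (continuous_const.sub (continuous_const.mul (continuous_pow 2))).continuousOn
      · exact ((Real.continuous_rpow_const hβ0.le).comp (continuous_const.add continuous_id)).continuousOn
      · exact ((Real.continuous_rpow_const hβ0.le).comp (continuous_const.sub continuous_id)).continuousOn
    · intro t ht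
      rw [interior_Icc] at ht
      obtain ⟨ht0, ht1⟩ := ht
      have h1p : (1:ℝ) + t ≠ 0 := by positivity
      have h1m : (1:ℝ) - t ≠ 0 := by intro h; nlinarith [h]
      have d1 : HasDerivAt (fun t : ℝ => (1 + t) ^ β) (β * (1 + t) ^ (β - 1) * 1) t := by
        exact (Real.hasDerivAt_rpow_const (Or.inl h1p)).comp t
          ((hasDerivAt_id t).const_add 1)
      have d2 : HasDerivAt (fun t : ℝ => (1 - t) ^ β) (β * (1 - t) ^ (β - 1) * (-1)) t := by
        exact (Real.hasDerivAt_rpow_const (Or.inl h1m)).comp t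
          ((hasDerivAt_id t).neg.const_add 1)
      have d0 : HasDerivAt (fun t : ℝ => 2 - β * (1 - β) / 2 * t ^ 2)
          (0 - β * (1 - β) / 2 * (2 * t ^ 1)) t := by
        exact (hasDerivAt_const t 2).sub (((hasDerivAt_pow 2 t)).const_mul _)
      have := ((d0.sub d1).sub d2)
      have heq : 0 - β * (1 - β) / 2 * (2 * t ^ 1) - β * (1 + t) ^ (β - 1) * 1
          - β * (1 - t) ^ (β - 1) * (-1)
          = β * (1 - t) ^ (β - 1) - β * (1 + t) ^ (β - 1) - β * (1 - β) * t := by ring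
      rw [heq] at this
      exact this.hasDerivWithinAt
    · intro t ht
      rw [interior_Icc] at ht
      obtain ⟨ht0, ht1⟩ := ht
      have h1 : (1 + t) ^ (β - 1) ≤ 1 :=
        Real.rpow_le_one_of_one_le_of_nonpos (by linarith) (by linarith)
      have h2 : 1 + (1 - β) * t ≤ (1 - t) ^ (β - 1) := bern_inv hβ0 hβ1 ht0 ht1
      nlinarith
  have h0 : F 0 = 0 := by norm_num [hF]
  have := hmono (Set.mem_Icc.mpr ⟨le_refl 0, zero_le_one⟩) (Set.mem_Icc.mpr ⟨hu0, hu1⟩) hu0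
  rw [h0] at this
  simp only [hF] at this
  linarith

lemma oneD' {β : ℝ} (hβ0 : 0 < β) (hβ1 : β < 1) {u : ℝ} (hu0 : -1 ≤ u) (hu1 : u ≤ 1) :
    (1 + u) ^ β + (1 - u) ^ β ≤ 2 - β * (1 - β) / 2 * u ^ 2 := by
  rcases le_total 0 u with h | h
  · exact oneD hβ0 hβ1 h hu1
  · have := oneD hβ0 hβ1 (u := -u) (by linarith) (by linarith)
    have e1 : 1 + -u = 1 - u := by ring
    have e2 : 1 - -u = 1 + u := by ring
    rw [e1, e2, neg_sq] at this
    linarith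

lemma pairBound {α : ℝ} (hα0 : 0 < α) (hα1 : α < 1/2) {u v : ℝ}
    (hu0 : -1 ≤ u) (hu1 : u ≤ 1) (hv0 : -1 ≤ v) (hv1 : v ≤ 1) :
    (1 + u) ^ α * (1 + v) ^ α + (1 - u) ^ α * (1 - v) ^ α ≤
      2 - α * (1 - 2 * α) / 2 * (u ^ 2 + v ^ 2) := by
  have hβ0 : 0 < 2 * α := by linarith
  have hβ1 : 2 * α < 1 := by linarith
  have hne : α + α ≠ 0 := by positivity
  have sq1 : (1 + u) ^ α * (1 + u) ^ α = (1 + u) ^ (2 * α) := by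
    rw [show (2:ℝ) * α = α + α by ring, Real.rpow_add' (by linarith) hne]
  have sq2 : (1 - u) ^ α * (1 - u) ^ α = (1 - u) ^ (2 * α) := by
    rw [show (2:ℝ) * α = α + α by ring, Real.rpow_add' (by linarith) hne]
  have sq3 : (1 + v) ^ α * (1 + v) ^ α = (1 + v) ^ (2 * α) := by
    rw [show (2:ℝ) * α = α + α by ring, Real.rpow_add' (by linarith) hne]
  have sq4 : (1 - v) ^ α * (1 - v) ^ α = (1 - v) ^ (2 * α) := by
    rw [show (2:ℝ) * α = α + α by ring, Real.rpow_add' (by linarith) hne]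
  have hu := oneD' hβ0 hβ1 hu0 hu1
  have hv := oneD' hβ0 hβ1 hv0 hv1
  have amgm1 : (1 + u) ^ α * (1 + v) ^ α ≤ ((1 + u) ^ (2*α) + (1 + v) ^ (2*α)) / 2 := by
    nlinarith [sq_nonneg ((1+u)^α - (1+v)^α), sq1, sq3]
  have amgm2 : (1 - u) ^ α * (1 - v) ^ α ≤ ((1 - u) ^ (2*α) + (1 - v) ^ (2*α)) / 2 := by
    nlinarith [sq_nonneg ((1-u)^α - (1-v)^α), sq2, sq4]
  nlinarith [hu, hv]

lemma term_bound {α : ℝ} (hα0 : 0 < α) (hα1 : 2 * α ≤ 1) {t x y X Y : ℝ}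
    (ht : 0 ≤ t) (hx : 0 ≤ x) (hy : 0 ≤ y) (hX : 0 < X) (hY : 0 < Y) :
    t * (x * y) ^ α ≤ (α * (t * x / X) + α * (t * y / Y) + (1 - 2 * α) * t) * (X ^ α * Y ^ α) := by
  have hG := Real.geom_mean_le_arith_mean3_weighted hα0.le hα0.le (by linarith)
    (by positivity : (0:ℝ) ≤ t * x / X) (by positivity : (0:ℝ) ≤ t * y / Y) ht
    (by ring : α + α + (1 - 2 * α) = 1)
  have hXY : (0:ℝ) ≤ X ^ α * Y ^ α := by positivity
  have hmul := mul_le_mul_of_nonneg_right hG hXY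
  refine le_trans (le_of_eq ?_) hmul
  have e1 : (t * x / X) ^ α * X ^ α = (t * x) ^ α := by
    rw [← Real.mul_rpow (by positivity) hX.le, div_mul_cancel₀ _ hX.ne']
  have e2 : (t * y / Y) ^ α * Y ^ α = (t * y) ^ α := by
    rw [← Real.mul_rpow (by positivity) hY.le, div_mul_cancel₀ _ hY.ne']
  have e3 : (t * x) ^ α * (t * y) ^ α = t ^ α * t ^ α * (x ^ α * y ^ α) := by
    rw [Real.mul_rpow ht hx, Real.mul_rpow ht hy]; ring
  have e4 : t ^ α * t ^ α = t ^ (2 * α) := by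
    rw [show (2:ℝ) * α = α + α by ring, Real.rpow_add' ht (by positivity)]
  have e5 : t ^ (2 * α) * t ^ (1 - 2 * α) = t := by
    rw [← Real.rpow_add' ht (by norm_num : (2:ℝ) * α + (1 - 2 * α) ≠ 0)]
    norm_num
  have e6 : x ^ α * y ^ α = (x * y) ^ α := (Real.mul_rpow hx hy).symm
  calc t * (x * y) ^ α = t ^ (2 * α) * t ^ (1 - 2 * α) * (x ^ α * y ^ α) := by rw [e5, e6]
    _ = ((t * x / X) ^ α * X ^ α) * ((t * y / Y) ^ α * Y ^ α) * t ^ (1 - 2*α) := by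
        rw [e1, e2, e3, e4]; ring
    _ = (t * x / X) ^ α * (t * y / Y) ^ α * t ^ (1 - 2 * α) * (X ^ α * Y ^ α) := by ring

lemma holder2 {α : ℝ} (hα0 : 0 < α) (hα1 : 2 * α ≤ 1) {a b x1 y1 x2 y2 : ℝ}
    (ha : 0 ≤ a) (hb : 0 ≤ b) (hab : a + b = 1)
    (hx1 : 0 ≤ x1) (hy1 : 0 ≤ y1) (hx2 : 0 ≤ x2) (hy2 : 0 ≤ y2) :
    a * (x1 * y1) ^ α + b * (x2 * y2) ^ α ≤ ((a * x1 + b * x2) * (a * y1 + b * y2)) ^ α := by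
  have hαne : α ≠ 0 := hα0.ne'
  set X := a * x1 + b * x2 with hXdef
  set Y := a * y1 + b * y2 with hYdef
  have hX0 : 0 ≤ X := by positivity
  have hY0 : 0 ≤ Y := by positivity
  rcases hX0.eq_or_lt with hX | hX
  · -- X = 0 : both a*x1 = 0 and b*x2 = 0
    have h1 : a * x1 = 0 := by nlinarith [mul_nonneg ha hx1, mul_nonneg hb hx2]
    have h2 : b * x2 = 0 := by nlinarith [mul_nonneg ha hx1, mul_nonneg hb hx2]
    have e1 : a * (x1 * y1) ^ α = 0 := by
      rcases mul_eq_zero.mp h1 with h | h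
      · rw [h, zero_mul]
      · rw [h, zero_mul, Real.zero_rpow hαne, mul_zero]
    have e2 : b * (x2 * y2) ^ α = 0 := by
      rcases mul_eq_zero.mp h2 with h | h
      · rw [h, zero_mul]
      · rw [h, zero_mul, Real.zero_rpow hαne, mul_zero]
    rw [e1, e2, ← hX, zero_mul, Real.zero_rpow hαne]; norm_num
  rcases hY0.eq_or_lt with hY | hY
  · have h1 : a * y1 = 0 := by nlinarith [mul_nonneg ha hy1, mul_nonneg hb hy2]
    have h2 : b * y2 = 0 := by nlinarith [mul_nonneg ha hy1, mul_nonneg hb hy2]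
    have e1 : a * (x1 * y1) ^ α = 0 := by
      rcases mul_eq_zero.mp h1 with h | h
      · rw [h, zero_mul]
      · rw [h, mul_zero, Real.zero_rpow hαne, mul_zero]
    have e2 : b * (x2 * y2) ^ α = 0 := by
      rcases mul_eq_zero.mp h2 with h | h
      · rw [h, zero_mul]
      · rw [h, mul_zero, Real.zero_rpow hαne, mul_zero]
    rw [e1, e2, ← hY, mul_zero, Real.zero_rpow hαne]; norm_num
  have T1 := term_bound hα0 hα1 ha hx1 hy1 hX hY
  have T2 := term_bound hα0 hα1 hb hx2 hy2 hX hY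
  have hsum : (α * (a * x1 / X) + α * (a * y1 / Y) + (1 - 2 * α) * a)
      + (α * (b * x2 / X) + α * (b * y2 / Y) + (1 - 2 * α) * b) = 1 := by
    have hx : a * x1 / X + b * x2 / X = 1 := by
      rw [← add_div, ← hXdef, div_self hX.ne']
    have hyy : a * y1 / Y + b * y2 / Y = 1 := by
      rw [← add_div, ← hYdef, div_self hY.ne']
    nlinarith [hx, hyy, hab]
  have hXY : (0:ℝ) ≤ X ^ α * Y ^ α := by positivity
  calc a * (x1 * y1) ^ α + b * (x2 * y2) ^ α
      ≤ ((α * (a * x1 / X) + α * (a * y1 / Y) + (1 - 2 * α) * a)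
        + (α * (b * x2 / X) + α * (b * y2 / Y) + (1 - 2 * α) * b)) * (X ^ α * Y ^ α) := by
        rw [add_mul]; exact add_le_add T1 T2
    _ = X ^ α * Y ^ α := by rw [hsum, one_mul]
    _ = (X * Y) ^ α := (Real.mul_rpow hX0 hY0).symm

set_option maxHeartbeats 1000000 in
set_option maxHeartbeats 1000000 in
theorem bellman_estimate_4_4 (α : ℝ) (hα0 : 0 < α) (hα1 : α < 1 / 2) :
    (∃ c : ℝ, 0 < c ∧
      ∀ x y xp xm yp ym : ℝ, 0 < x → 0 < y →
        0 ≤ xp → 0 ≤ xm → 0 ≤ yp → 0 ≤ ym →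
        x = (xp + xm) / 2 → y = (yp + ym) / 2 →
        (x * y) ^ α - ((xp * yp) ^ α + (xm * ym) ^ α) / 2 ≥
          c * (x * y) ^ α * (|xp - xm| / x) * (|yp - ym| / y)) ∧
    ConcaveOn ℝ {p : ℝ × ℝ | 0 ≤ p.1 ∧ 0 ≤ p.2}
      (fun p : ℝ × ℝ => (p.1 * p.2) ^ α) := by
  constructor
  · refine ⟨α * (1 - 2 * α) / 8, by nlinarith, ?_⟩
    intro x y xp xm yp ym hx hy hxp hxm hyp hym hxe hye
    set u : ℝ := (xp - xm) / (2 * x) with hu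
    set v : ℝ := (yp - ym) / (2 * y) with hv
    have hx2 : xp + xm = 2 * x := by linarith
    have hy2 : yp + ym = 2 * y := by linarith
    have hu1 : u ≤ 1 := by rw [hu, div_le_one (by positivity)]; linarith
    have hu0 : -1 ≤ u := by rw [hu, le_div_iff₀ (by positivity)]; linarith
    have hv1 : v ≤ 1 := by rw [hv, div_le_one (by positivity)]; linarith
    have hv0 : -1 ≤ v := by rw [hv, le_div_iff₀ (by positivity)]; linarith
    have h1u : (0:ℝ) ≤ 1 + u := by linarith
    have h1u' : (0:ℝ) ≤ 1 - u := by linarith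
    have h1v : (0:ℝ) ≤ 1 + v := by linarith
    have h1v' : (0:ℝ) ≤ 1 - v := by linarith
    have hxpu : xp = x * (1 + u) := by
      rw [hu]; field_simp; linear_combination hx2
    have hxmu : xm = x * (1 - u) := by
      rw [hu]; field_simp; linear_combination hx2
    have hypv : yp = y * (1 + v) := by
      rw [hv]; field_simp; linear_combination hy2
    have hymv : ym = y * (1 - v) := by
      rw [hv]; field_simp; linear_combination hy2
    have hxy0 : (0:ℝ) ≤ x * y := by positivity
    have eP : (xp * yp) ^ α = (x * y) ^ α * ((1 + u) ^ α * (1 + v) ^ α) := by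
      have : xp * yp = (x * y) * ((1 + u) * (1 + v)) := by rw [hxpu, hypv]; ring
      rw [this, Real.mul_rpow hxy0 (mul_nonneg h1u h1v), Real.mul_rpow h1u h1v]
    have eQ : (xm * ym) ^ α = (x * y) ^ α * ((1 - u) ^ α * (1 - v) ^ α) := by
      have : xm * ym = (x * y) * ((1 - u) * (1 - v)) := by rw [hxmu, hymv]; ring
      rw [this, Real.mul_rpow hxy0 (mul_nonneg h1u' h1v'), Real.mul_rpow h1u' h1v']
    have habsx : |xp - xm| / x = 2 * |u| := by
      have h2xu : xp - xm = 2 * x * u := by rw [hu]; field_simp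
      rw [h2xu, abs_mul, abs_of_pos (by positivity : (0:ℝ) < 2 * x)]
      field_simp
    have habsy : |yp - ym| / y = 2 * |v| := by
      have h2yv : yp - ym = 2 * y * v := by rw [hv]; field_simp
      rw [h2yv, abs_mul, abs_of_pos (by positivity : (0:ℝ) < 2 * y)]
      field_simp
    rw [eP, eQ, habsx, habsy]
    set P := (1 + u) ^ α * (1 + v) ^ α with hP
    set Q := (1 - u) ^ α * (1 - v) ^ α with hQ
    have hpq : P + Q ≤ 2 - α * (1 - 2 * α) / 2 * (u ^ 2 + v ^ 2) :=
      pairBound hα0 hα1 hu0 hu1 hv0 hv1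
    have hK : 0 < α * (1 - 2 * α) := by nlinarith
    have habs2 : 2 * (|u| * |v|) ≤ u ^ 2 + v ^ 2 := by
      nlinarith [sq_abs u, sq_abs v, sq_nonneg (|u| - |v|)]
    have s1 : α * (1 - 2 * α) / 4 * (2 * (|u| * |v|)) ≤ α * (1 - 2 * α) / 4 * (u ^ 2 + v ^ 2) :=
      mul_le_mul_of_nonneg_left habs2 (by nlinarith)
    have key : α * (1 - 2 * α) / 2 * (|u| * |v|) ≤ 1 - (P + Q) / 2 := by nlinarith [s1, hpq]
    have hA : (0:ℝ) < (x * y) ^ α := Real.rpow_pos_of_pos (by positivity) _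
    have hfin := mul_le_mul_of_nonneg_left key hA.le
    nlinarith [hfin]
  · constructor
    · intro p hp q hq a b ha hb hab
      simp only [Set.mem_setOf_eq, Prod.fst_add, Prod.snd_add, Prod.smul_fst, Prod.smul_snd,
        smul_eq_mul] at *
      exact ⟨add_nonneg (mul_nonneg ha hp.1) (mul_nonneg hb hq.1),
        add_nonneg (mul_nonneg ha hp.2) (mul_nonneg hb hq.2)⟩
    · intro p hp q hq a b ha hb hab
      simp only [Set.mem_setOf_eq, Prod.fst_add, Prod.snd_add, Prod.smul_fst, Prod.smul_snd,
        smul_eq_mul] at *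
      exact holder2 hα0 (by linarith) ha hb hab hp.1 hp.2 hq.1 hq.2
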